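/- Consider a two-tier network where tier j ∈ {1,2} has nearest-BS distance Z_j, with Z_1, Z_2 independent and P(Z_j > z) = exp(−πλ_j z²) for intensities λ_1, λ_2 > 0. Suppose both tiers have the same path loss exponent α > 2, powers P_1, P_2 > 0, and biases B_1 = 1, B_2 = B > 1. Then the probability that the user associates with tier 1, i.e., P(P_1 Z_1^{−α} ≥ B P_2 Z_2^{−α}), equals λ_1 / (λ_1 + λ_2 (B P_2 / P_1)^{2/α}). -/

import Mathlib

open MeasureTheory ProbabilityTheory Real Set

/-- The real integral `∫ t in (0,1], 1 - t^r = r/(r+1)` for `r > 0`. -/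
lemma aux_integral_one_sub_rpow {r : ℝ} (hr : 0 < r) :
    ∫ t in Ioc (0:ℝ) 1, (1 - t ^ r) = r / (r + 1) := by
  have h01 : (0:ℝ) ≤ 1 := zero_le_one
  rw [← intervalIntegral.integral_of_le h01]
  have hint : IntervalIntegrable (fun t : ℝ => t ^ r) volume 0 1 :=
    intervalIntegral.intervalIntegrable_rpow' (by linarith)
  rw [intervalIntegral.integral_sub intervalIntegrable_const hint]
  rw [integral_rpow (Or.inl (by linarith))]
  rw [Real.one_rpow, Real.zero_rpow (by positivity)]
  simp only [intervalIntegral.integral_const, smul_eq_mul, mul_one, sub_zero]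
  field_simp
  ring

/-- Exponential moment of a Rayleigh-tailed random variable:
`E[exp(-a Z²)] = r/(r+1)` with `r = π λ / a`. -/
lemma aux_exp_moment {Ω : Type*} [MeasurableSpace Ω] (μ : Measure Ω) [IsProbabilityMeasure μ]
    {lam a : ℝ} (hlam : 0 < lam) (ha : 0 < a) (Z : Ω → ℝ) (hm : Measurable Z)
    (hZ : ∀ z ≥ (0:ℝ), μ {ω | Z ω > z} = ENNReal.ofReal (Real.exp (-(π * lam * z ^ 2)))) :
    ∫⁻ ω, ENNReal.ofReal (Real.exp (-(a * Z ω ^ 2))) ∂μ =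
      ENNReal.ofReal ((π * lam / a) / (π * lam / a + 1)) := by
  set r := π * lam / a with hrdef
  have hr : 0 < r := by positivity
  have hZpos : μ {ω | Z ω > 0} = 1 := by
    have := hZ 0 le_rfl
    simpa using this
  have hZ0 : μ {ω | Z ω ≤ 0} = 0 := by
    have hms : MeasurableSet {ω | Z ω > 0} := hm measurableSet_Ioi
    have hc : {ω | Z ω ≤ 0} = {ω | Z ω > 0}ᶜ := by ext ω; simp [not_lt]
    rw [hc, measure_compl hms (measure_ne_top μ _), hZpos, measure_univ, tsub_self]
  have key : ∀ t ∈ Ioi (0:ℝ),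
      μ {ω | t ≤ Real.exp (-(a * Z ω ^ 2))} = ENNReal.ofReal (1 - t ^ r) := by
    intro t ht
    simp only [mem_Ioi] at ht
    rcases le_or_gt t 1 with ht1 | ht1
    · set L := -(Real.log t) / a with hLdef
      have hlogt : Real.log t ≤ 0 := Real.log_nonpos ht.le ht1
      have hL0 : 0 ≤ L := by
        rw [hLdef]
        exact div_nonneg (by linarith) ha.le
      set s := Real.sqrt L with hsdef
      have hs0 : 0 ≤ s := Real.sqrt_nonneg _
      have hset : {ω | t ≤ Real.exp (-(a * Z ω ^ 2))} = {ω | -s ≤ Z ω ∧ Z ω ≤ s} := by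
        ext ω
        simp only [mem_setOf_eq]
        rw [← Real.sq_le hL0, ← Real.log_le_iff_le_exp ht, hLdef, le_div_iff₀ ha]
        constructor <;> intro h <;> nlinarith
      have hsub : μ {ω | -s ≤ Z ω ∧ Z ω ≤ s} = μ {ω | Z ω ≤ s} := by
        apply le_antisymm
        · exact measure_mono fun ω hω => hω.2
        · calc μ {ω | Z ω ≤ s} ≤ μ ({ω | -s ≤ Z ω ∧ Z ω ≤ s} ∪ {ω | Z ω ≤ 0}) := by
                apply measure_mono
                intro ω hω
                rcases le_or_gt (-s) (Z ω) with h | h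
                · exact Or.inl ⟨h, hω⟩
                · exact Or.inr (le_trans h.le (by linarith))
            _ ≤ μ {ω | -s ≤ Z ω ∧ Z ω ≤ s} + μ {ω | Z ω ≤ 0} := measure_union_le _ _
            _ = μ {ω | -s ≤ Z ω ∧ Z ω ≤ s} := by rw [hZ0, add_zero]
      have htail : μ {ω | Z ω ≤ s} = 1 - ENNReal.ofReal (Real.exp (-(π * lam * s ^ 2))) := by
        have hms : MeasurableSet {ω | Z ω > s} := hm measurableSet_Ioi
        have hc : {ω | Z ω ≤ s} = {ω | Z ω > s}ᶜ := by ext ω; simp [not_lt]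
        rw [hc, measure_compl hms (measure_ne_top μ _), hZ s hs0, measure_univ]
      have hsq : s ^ 2 = L := Real.sq_sqrt hL0
      have hexp : Real.exp (-(π * lam * s ^ 2)) = t ^ r := by
        rw [hsq, Real.rpow_def_of_pos ht]
        congr 1
        rw [hLdef, hrdef]
        field_simp
      rw [hset, hsub, htail, hexp, ← ENNReal.ofReal_one,
        ← ENNReal.ofReal_sub _ (Real.rpow_nonneg ht.le r)]
    · have hempty : {ω | t ≤ Real.exp (-(a * Z ω ^ 2))} = ∅ := by
        ext ω
        simp only [mem_setOf_eq, mem_empty_iff_false, iff_false, not_le]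
        have h1 : Real.exp (-(a * Z ω ^ 2)) ≤ 1 := by
          rw [Real.exp_le_one_iff]
          nlinarith [sq_nonneg (Z ω)]
        linarith
      have h2 : (1:ℝ) < t ^ r := Real.one_lt_rpow_iff_of_pos ht |>.mpr (Or.inl ⟨ht1, hr⟩)
      rw [hempty, measure_empty]
      symm
      rw [ENNReal.ofReal_eq_zero]
      linarith
  have hmbl : AEMeasurable (fun ω => Real.exp (-(a * Z ω ^ 2))) μ :=
    (Real.measurable_exp.comp ((measurable_const.mul (hm.pow_const 2)).neg)).aemeasurable
  rw [lintegral_eq_lintegral_meas_le μ (ae_of_all _ fun ω => (Real.exp_pos _).le) hmbl]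
  rw [setLIntegral_congr_fun measurableSet_Ioi key]
  have hsplit : Ioi (0:ℝ) = Ioc 0 1 ∪ Ioi 1 := (Ioc_union_Ioi_eq_Ioi zero_le_one).symm
  rw [hsplit, lintegral_union measurableSet_Ioi (Ioc_disjoint_Ioi le_rfl)]
  have hzero : ∫⁻ t in Ioi (1:ℝ), ENNReal.ofReal (1 - t ^ r) = 0 := by
    rw [setLIntegral_congr_fun measurableSet_Ioi
      (fun t (ht : t ∈ Ioi (1:ℝ)) => ?_), lintegral_zero]
    rw [ENNReal.ofReal_eq_zero]
    have h2 : (1:ℝ) < t ^ r :=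
      Real.one_lt_rpow_iff_of_pos (lt_trans one_pos ht) |>.mpr (Or.inl ⟨ht, hr⟩)
    linarith
  have hint : IntegrableOn (fun t : ℝ => 1 - t ^ r) (Ioc 0 1) volume := by
    have h := intervalIntegral.intervalIntegrable_rpow' (a := 0) (b := 1)
      (r := r) (by linarith)
    have h2 : IntervalIntegrable (fun t : ℝ => 1 - t ^ r) volume 0 1 :=
      intervalIntegrable_const.sub h
    rwa [intervalIntegrable_iff_integrableOn_Ioc_of_le zero_le_one] at h2
  have hnn : 0 ≤ᵐ[volume.restrict (Ioc (0:ℝ) 1)] fun t : ℝ => 1 - t ^ r := by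
    refine (ae_restrict_iff' measurableSet_Ioc).mpr (ae_of_all _ fun t ht => ?_)
    have h3 : t ^ r ≤ 1 := Real.rpow_le_one ht.1.le ht.2 hr.le
    simp only [Pi.zero_apply]
    linarith
  rw [hzero, add_zero, ← ofReal_integral_eq_lintegral_ofReal hint hnn,
    aux_integral_one_sub_rpow hr]

theorem tier1_association_probability
    {Ω : Type*} [MeasurableSpace Ω] (μ : Measure Ω) [IsProbabilityMeasure μ]
    (lam1 lam2 : ℝ) (hlam1 : 0 < lam1) (hlam2 : 0 < lam2)
    (α : ℝ) (hα : 2 < α) (P1 P2 : ℝ) (hP1 : 0 < P1) (hP2 : 0 < P2)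
    (B : ℝ) (hB : 1 < B)
    (Z1 Z2 : Ω → ℝ)
    (hZ1 : ∀ z ≥ (0:ℝ), μ {ω | Z1 ω > z} = ENNReal.ofReal (Real.exp (-(π * lam1 * z ^ 2))))
    (hZ2 : ∀ z ≥ (0:ℝ), μ {ω | Z2 ω > z} = ENNReal.ofReal (Real.exp (-(π * lam2 * z ^ 2))))
    (hindep : IndepFun Z1 Z2 μ)
    (hm1 : Measurable Z1) (hm2 : Measurable Z2) :
    μ {ω | P1 * (Z1 ω) ^ (-α) ≥ B * P2 * (Z2 ω) ^ (-α)} =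
      ENNReal.ofReal (lam1 / (lam1 + lam2 * (B * P2 / P1) ^ (2 / α))) := by
  have hα0 : 0 < α := by linarith
  set k := B * P2 / P1 with hkdef
  have hk : 0 < k := by positivity
  set c := k ^ (-α⁻¹) with hcdef
  have hc : 0 < c := Real.rpow_pos_of_pos hk _
  set q := k ^ (2 / α) with hqdef
  have hq : 0 < q := Real.rpow_pos_of_pos hk _
  have hc2 : c ^ 2 = q⁻¹ := by
    rw [hcdef, hqdef, ← Real.rpow_natCast (k ^ (-α⁻¹)) 2, ← Real.rpow_mul hk.le,
      ← Real.rpow_neg hk.le]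
    congr 1
    push_cast
    field_simp
  set a := π * lam1 * c ^ 2 with hadef
  have ha : 0 < a := by positivity
  have hZ1le0 : μ {ω | Z1 ω ≤ 0} = 0 := by
    have hpos : μ {ω | Z1 ω > 0} = 1 := by simpa using hZ1 0 le_rfl
    have hms : MeasurableSet {ω | Z1 ω > 0} := hm1 measurableSet_Ioi
    have hcc : {ω | Z1 ω ≤ 0} = {ω | Z1 ω > 0}ᶜ := by ext ω; simp [not_lt]
    rw [hcc, measure_compl hms (measure_ne_top μ _), hpos, measure_univ, tsub_self]
  have hZ2le0 : μ {ω | Z2 ω ≤ 0} = 0 := by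
    have hpos : μ {ω | Z2 ω > 0} = 1 := by simpa using hZ2 0 le_rfl
    have hms : MeasurableSet {ω | Z2 ω > 0} := hm2 measurableSet_Ioi
    have hcc : {ω | Z2 ω ≤ 0} = {ω | Z2 ω > 0}ᶜ := by ext ω; simp [not_lt]
    rw [hcc, measure_compl hms (measure_ne_top μ _), hpos, measure_univ, tsub_self]
  -- Step 1: the association event coincides a.e. with `{Z1 ≤ c * Z2}`
  have hiff : ∀ x y : ℝ, 0 < x → 0 < y →
      (P1 * x ^ (-α) ≥ B * P2 * y ^ (-α) ↔ x ≤ c * y) := by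
    intro x y hx hy
    have hxa : 0 < x ^ α := Real.rpow_pos_of_pos hx α
    have hya : 0 < y ^ α := Real.rpow_pos_of_pos hy α
    have hca : c ^ α = k⁻¹ := by
      rw [hcdef, ← Real.rpow_mul hk.le, show -α⁻¹ * α = -1 by field_simp,
        Real.rpow_neg_one]
    rw [ge_iff_le, Real.rpow_neg hx.le, Real.rpow_neg hy.le, ← div_eq_mul_inv,
      ← div_eq_mul_inv, div_le_div_iff₀ hya hxa,
      ← Real.rpow_le_rpow_iff hx.le (mul_pos hc hy).le hα0,
      Real.mul_rpow hc.le hy.le, hca, hkdef, inv_div, div_mul_eq_mul_div,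
      le_div_iff₀ (by positivity)]
    constructor <;> intro h <;> nlinarith
  have hE : μ {ω | P1 * (Z1 ω) ^ (-α) ≥ B * P2 * (Z2 ω) ^ (-α)}
      = μ {ω | Z1 ω ≤ c * Z2 ω} := by
    have hGc : μ ({ω | 0 < Z1 ω} ∩ {ω | 0 < Z2 ω})ᶜ = 0 := by
      rw [compl_inter]
      apply measure_union_null
      · have : {ω | 0 < Z1 ω}ᶜ = {ω | Z1 ω ≤ 0} := by ext ω; simp [not_lt]
        rw [this]; exact hZ1le0
      · have : {ω | 0 < Z2 ω}ᶜ = {ω | Z2 ω ≤ 0} := by ext ω; simp [not_lt]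
        rw [this]; exact hZ2le0
    calc μ {ω | P1 * (Z1 ω) ^ (-α) ≥ B * P2 * (Z2 ω) ^ (-α)}
        = μ ({ω | P1 * (Z1 ω) ^ (-α) ≥ B * P2 * (Z2 ω) ^ (-α)}
            ∩ ({ω | 0 < Z1 ω} ∩ {ω | 0 < Z2 ω})) := (measure_inter_conull hGc).symm
      _ = μ ({ω | Z1 ω ≤ c * Z2 ω} ∩ ({ω | 0 < Z1 ω} ∩ {ω | 0 < Z2 ω})) := by
          congr 1
          ext ω
          simp only [mem_inter_iff, mem_setOf_eq]
          constructor
          · rintro ⟨h, h1, h2⟩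
            exact ⟨(hiff _ _ h1 h2).mp h, h1, h2⟩
          · rintro ⟨h, h1, h2⟩
            exact ⟨(hiff _ _ h1 h2).mpr h, h1, h2⟩
      _ = μ {ω | Z1 ω ≤ c * Z2 ω} := measure_inter_conull hGc
  -- Step 2: product representation via independence
  haveI h1p : IsProbabilityMeasure (μ.map Z1) := Measure.isProbabilityMeasure_map hm1.aemeasurable
  haveI h2p : IsProbabilityMeasure (μ.map Z2) := Measure.isProbabilityMeasure_map hm2.aemeasurable
  have hpair := (indepFun_iff_map_prod_eq_prod_map_map hm1.aemeasurable hm2.aemeasurable).mp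
    hindep
  have hsmeas : MeasurableSet {p : ℝ × ℝ | p.1 ≤ c * p.2} :=
    measurableSet_le measurable_fst (measurable_const.mul measurable_snd)
  have hprod : μ {ω | Z1 ω ≤ c * Z2 ω}
      = ∫⁻ y, (μ.map Z1) {x | x ≤ c * y} ∂(μ.map Z2) := by
    have hpm : Measurable fun ω => (Z1 ω, Z2 ω) := hm1.prodMk hm2
    rw [show {ω | Z1 ω ≤ c * Z2 ω}
        = (fun ω => (Z1 ω, Z2 ω)) ⁻¹' {p : ℝ × ℝ | p.1 ≤ c * p.2} from rfl,
      ← Measure.map_apply hpm hsmeas, hpair, Measure.prod_apply_symm hsmeas]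
    rfl
  -- Step 3: compute the inner measure for a.e. `y`
  have hν2null : (μ.map Z2) {y : ℝ | ¬ 0 < y} = 0 := by
    have h1 : {y : ℝ | ¬ 0 < y} = Iic 0 := by ext y; simp [not_lt]
    rw [h1, Measure.map_apply hm2 measurableSet_Iic]
    exact hZ2le0
  have hcongr : ∫⁻ y, (μ.map Z1) {x | x ≤ c * y} ∂(μ.map Z2)
      = ∫⁻ y, (1 - ENNReal.ofReal (Real.exp (-(a * y ^ 2)))) ∂(μ.map Z2) := by
    apply lintegral_congr_ae
    filter_upwards [(ae_iff (p := fun y : ℝ => 0 < y)).mpr hν2null] with y hy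
    have hcy : (0:ℝ) ≤ c * y := by positivity
    have h1 : {x : ℝ | x ≤ c * y} = (Ioi (c * y))ᶜ := by ext x; simp [not_lt]
    have h2 : (μ.map Z1) (Ioi (c * y)) = μ {ω | Z1 ω > c * y} :=
      Measure.map_apply hm1 measurableSet_Ioi
    rw [h1, measure_compl measurableSet_Ioi (measure_ne_top _ _),
      measure_univ, h2, hZ1 _ hcy]
    congr 2
    rw [hadef]
    ring
  -- Step 4: subtraction and the exponential moment
  have hgm : Measurable fun y : ℝ => ENNReal.ofReal (Real.exp (-(a * y ^ 2))) :=
    ENNReal.measurable_ofReal.comp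
      (Real.measurable_exp.comp ((measurable_const.mul (measurable_id.pow_const 2)).neg))
  have hgle : (fun y : ℝ => ENNReal.ofReal (Real.exp (-(a * y ^ 2))))
      ≤ᵐ[μ.map Z2] fun _ => 1 := by
    refine ae_of_all _ fun y => ?_
    rw [show (1 : ENNReal) = ENNReal.ofReal 1 from ENNReal.ofReal_one.symm]
    apply ENNReal.ofReal_le_ofReal
    rw [Real.exp_le_one_iff]
    nlinarith [sq_nonneg y]
  have hfin : ∫⁻ y, ENNReal.ofReal (Real.exp (-(a * y ^ 2))) ∂(μ.map Z2) ≠ ⊤ := by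
    apply ne_top_of_le_ne_top ENNReal.one_ne_top
    calc ∫⁻ y, ENNReal.ofReal (Real.exp (-(a * y ^ 2))) ∂(μ.map Z2)
        ≤ ∫⁻ _, 1 ∂(μ.map Z2) := lintegral_mono_ae hgle
      _ = 1 := by rw [lintegral_one, measure_univ]
  have hsub : ∫⁻ y, (1 - ENNReal.ofReal (Real.exp (-(a * y ^ 2)))) ∂(μ.map Z2)
      = 1 - ∫⁻ y, ENNReal.ofReal (Real.exp (-(a * y ^ 2))) ∂(μ.map Z2) := by
    rw [show (1 : ENNReal) - ∫⁻ y, ENNReal.ofReal (Real.exp (-(a * y ^ 2))) ∂(μ.map Z2)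
        = (∫⁻ _, 1 ∂(μ.map Z2)) - ∫⁻ y, ENNReal.ofReal (Real.exp (-(a * y ^ 2))) ∂(μ.map Z2)
        from by rw [lintegral_one, measure_univ]]
    exact lintegral_sub hgm hfin hgle
  have hmap : ∫⁻ y, ENNReal.ofReal (Real.exp (-(a * y ^ 2))) ∂(μ.map Z2)
      = ∫⁻ ω, ENNReal.ofReal (Real.exp (-(a * Z2 ω ^ 2))) ∂μ := lintegral_map hgm hm2
  have hmom := aux_exp_moment μ hlam2 ha Z2 hm2 hZ2
  -- Step 5: assemble and simplify
  rw [hE, hprod, hcongr, hsub, hmap, hmom]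
  have hfrac0 : 0 ≤ (π * lam2 / a) / (π * lam2 / a + 1) := by positivity
  have halg : 1 - (π * lam2 / a) / (π * lam2 / a + 1) = lam1 / (lam1 + lam2 * q) := by
    have hrq : π * lam2 / a = lam2 * q / lam1 := by
      rw [hadef, hc2]
      field_simp
    rw [hrq]
    have h1 : lam1 ≠ 0 := hlam1.ne'
    have h2 : lam1 + lam2 * q ≠ 0 := by positivity
    field_simp
    ring
  rw [← ENNReal.ofReal_one, ← ENNReal.ofReal_sub _ hfrac0, halg]
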